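/- Let f:[0,1]→ℝ be concave and define F(u) = Σ_{i=1}^d f(u_i) on the simplex Δ' = {u ∈ ℝ^d : u_i ≥ u_i^0 for all i, Σ_i u_i = 1}, where u_i^0 = n_i/(n+s) with n_i ≥ 0, n = Σ_i n_i, s > 0. Then the minimum of F over Δ' is attained at a vertex of Δ', namely at the point u with u_j = u_j^0 + s/(n+s) for j = argmax_i n_i and u_i = u_i^0 for i ≠ j. -/

import Mathlib

open Finset

/-- Secant line lies below a concave function: for `t ∈ [0, σ]`,
`f (x + t) ≥ f x + (t/σ) (f (x+σ) - f x)`. -/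
lemma aux_concave_secant {f : ℝ → ℝ} (hf : ConcaveOn ℝ (Set.Icc (0:ℝ) 1) f)
    {x σ t : ℝ} (hx : 0 ≤ x) (hxs : x + σ ≤ 1) (hσ : 0 < σ)
    (ht0 : 0 ≤ t) (htσ : t ≤ σ) :
    f x + (t/σ) * (f (x+σ) - f x) ≤ f (x + t) := by
  have h1 : x ∈ Set.Icc (0:ℝ) 1 := ⟨hx, by linarith⟩
  have h2 : x + σ ∈ Set.Icc (0:ℝ) 1 := ⟨by linarith, hxs⟩
  have ha : (0:ℝ) ≤ 1 - t/σ := by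
    rw [sub_nonneg]
    exact div_le_one_of_le₀ htσ hσ.le
  have hb : (0:ℝ) ≤ t/σ := div_nonneg ht0 hσ.le
  have hab : (1 - t/σ) + t/σ = 1 := by ring
  have hcomb := hf.2 h1 h2 ha hb hab
  simp only [smul_eq_mul] at hcomb
  have hx' : (1 - t/σ) * x + (t/σ) * (x+σ) = x + t := by
    field_simp
    ring
  rw [hx'] at hcomb
  nlinarith [hcomb]

/-- Decreasing increments of a concave function: if `x ≤ y` then
`f (y+σ) - f y ≤ f (x+σ) - f x`. -/
lemma aux_concave_incr_mono {f : ℝ → ℝ} (hf : ConcaveOn ℝ (Set.Icc (0:ℝ) 1) f)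
    {x y σ : ℝ} (hx : 0 ≤ x) (hxy : x ≤ y) (hy : y + σ ≤ 1) (hσ : 0 < σ) :
    f (y+σ) - f y ≤ f (x+σ) - f x := by
  rcases eq_or_lt_of_le hxy with rfl | hlt
  · linarith
  · have hD0 : 0 < y + σ - x := by linarith
    have hmx : x ∈ Set.Icc (0:ℝ) 1 := ⟨hx, by linarith⟩
    have hmy : y + σ ∈ Set.Icc (0:ℝ) 1 := ⟨by linarith, hy⟩
    have ha1 : (0:ℝ) ≤ (y - x)/(y + σ - x) := div_nonneg (by linarith) hD0.le
    have ha2 : (0:ℝ) ≤ σ/(y + σ - x) := div_nonneg hσ.le hD0.le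
    have hab : (y - x)/(y + σ - x) + σ/(y + σ - x) = 1 := by
      field_simp
      ring
    -- y = (σ/D) • x + ((y-x)/D) • (y+σ)
    have h1 := hf.2 hmx hmy ha2 ha1 (by linarith [hab])
    -- x+σ = ((y-x)/D) • x + (σ/D) • (y+σ)
    have h2 := hf.2 hmx hmy ha1 ha2 hab
    simp only [smul_eq_mul] at h1 h2
    have e1 : σ/(y + σ - x) * x + (y - x)/(y + σ - x) * (y + σ) = y := by
      field_simp
      ring
    have e2 : (y - x)/(y + σ - x) * x + σ/(y + σ - x) * (y + σ) = x + σ := by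
      field_simp
      ring
    rw [e1] at h1
    rw [e2] at h2
    have h3 := add_le_add h1 h2
    have h4 : σ/(y + σ - x) * f x + (y - x)/(y + σ - x) * f (y + σ)
        + ((y - x)/(y + σ - x) * f x + σ/(y + σ - x) * f (y + σ))
        = f x + f (y + σ) := by
      linear_combination (f x + f (y + σ)) * hab
    linarith [h3, h4]

/-- For concave `f`, `F(u) = ∑ f(u i)` attains its minimum over the
shifted simplex `Δ' = {u : u i ≥ n i / (N + s), ∑ u i = 1}` at the vertex obtained by
putting all the slack `σ = s/(N+s)` on a coordinate `j` with maximal count `n j`. -/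
theorem idm_concave_min_at_vertex
    (d : ℕ) (hd : 0 < d) (n : Fin d → ℝ) (hn : ∀ i, 0 ≤ n i) (s : ℝ) (hs : 0 < s)
    (f : ℝ → ℝ) (hf : ConcaveOn ℝ (Set.Icc (0:ℝ) 1) f)
    (N : ℝ) (hN : N = ∑ i, n i)
    (j : Fin d) (hj : ∀ i, n i ≤ n j)
    (Δ' : Set (Fin d → ℝ))
    (hΔ' : Δ' = {u | (∀ i, n i / (N + s) ≤ u i) ∧ ∑ i, u i = 1})
    (umin : Fin d → ℝ)
    (humin : umin = fun i => n i / (N + s) + (if i = j then s / (N + s) else 0)) :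
    umin ∈ Δ' ∧ ∀ u ∈ Δ', ∑ i, f (umin i) ≤ ∑ i, f (u i) := by
  have hN0 : 0 ≤ N := by
    rw [hN]; exact Finset.sum_nonneg fun i _ => hn i
  have hP : 0 < N + s := by linarith
  set σ : ℝ := s / (N + s) with hσdef
  have hσ : 0 < σ := div_pos hs hP
  have hb : ∀ i, 0 ≤ n i / (N+s) := fun i => div_nonneg (hn i) hP.le
  have hsumb : ∑ i, n i / (N+s) = N / (N+s) := by
    rw [← Finset.sum_div, hN]
  have hNs : N/(N+s) + σ = 1 := by
    rw [hσdef, ← add_div, div_self hP.ne']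
  have hbs : ∀ i, n i / (N+s) + σ ≤ 1 := by
    intro i
    have hni : n i ≤ N := by
      rw [hN]; exact Finset.single_le_sum (fun k _ => hn k) (mem_univ i)
    rw [hσdef, ← add_div, div_le_one hP]
    linarith
  have hsumσ : ∑ i, (if i = j then σ else 0) = σ := by
    simp [Finset.sum_ite_eq']
  constructor
  · rw [hΔ', humin]
    constructor
    · intro i
      dsimp only
      have : (0:ℝ) ≤ if i = j then σ else 0 := by
        split
        · exact hσ.le
        · exact le_rfl
      linarith
    · dsimp only
      simp only [Finset.sum_add_distrib]
      rw [hsumb, hsumσ, hNs]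
  · intro u hu
    rw [hΔ'] at hu
    obtain ⟨hlo, hsum⟩ := hu
    have hup : ∀ i, u i ≤ n i/(N+s) + σ := by
      intro i
      have h1 : ∑ k ∈ univ.erase i, n k/(N+s) ≤ ∑ k ∈ univ.erase i, u k :=
        Finset.sum_le_sum fun k _ => hlo k
      have h2 : u i + ∑ k ∈ univ.erase i, u k = 1 := by
        rw [Finset.add_sum_erase _ _ (mem_univ i), hsum]
      have h3 : n i/(N+s) + ∑ k ∈ univ.erase i, n k/(N+s) = N/(N+s) := by
        rw [Finset.add_sum_erase _ (fun k => n k/(N+s)) (mem_univ i), hsumb]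
      linarith
    set c : ℝ := f (n j/(N+s) + σ) - f (n j/(N+s)) with hc
    have key : ∀ i, f (n i/(N+s)) + ((u i - n i/(N+s))/σ) * c ≤ f (u i) := by
      intro i
      have ht0 : 0 ≤ u i - n i/(N+s) := by linarith [hlo i]
      have htσ : u i - n i/(N+s) ≤ σ := by linarith [hup i]
      have hA := aux_concave_secant hf (hb i) (hbs i) hσ ht0 htσ
      have heq : n i/(N+s) + (u i - n i/(N+s)) = u i := by ring
      rw [heq] at hA
      have hbij : n i/(N+s) ≤ n j/(N+s) := by
        apply div_le_div_of_nonneg_right (hj i) hP.le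
      have hB : c ≤ f (n i/(N+s)+σ) - f (n i/(N+s)) :=
        aux_concave_incr_mono hf (hb i) hbij (hbs j) hσ
      have htnn : 0 ≤ (u i - n i/(N+s))/σ := div_nonneg ht0 hσ.le
      nlinarith [mul_le_mul_of_nonneg_left hB htnn]
    have hsumkey : ∑ i, (f (n i/(N+s)) + ((u i - n i/(N+s))/σ) * c) ≤ ∑ i, f (u i) :=
      Finset.sum_le_sum fun i _ => key i
    have hts : ∑ i, (u i - n i/(N+s)) = σ := by
      rw [Finset.sum_sub_distrib, hsum, hsumb]
      linarith
    have hlhs : ∑ i, (f (n i/(N+s)) + ((u i - n i/(N+s))/σ) * c)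
        = (∑ i, f (n i/(N+s))) + c := by
      rw [Finset.sum_add_distrib]
      congr 1
      have : ∑ i, ((u i - n i/(N+s))/σ) * c = (∑ i, (u i - n i/(N+s)))/σ * c := by
        rw [Finset.sum_div, Finset.sum_mul]
      rw [this, hts, div_self hσ.ne', one_mul]
    have humin' : ∑ i, f (umin i) = (∑ i, f (n i/(N+s))) + c := by
      have : ∀ i, f (umin i) = f (n i/(N+s)) + (if i = j then c else 0) := by
        intro i
        rw [humin]
        dsimp only
        by_cases h : i = j
        · subst h; simp [hc]
        · simp [h]
      rw [Finset.sum_congr rfl (fun i _ => this i), Finset.sum_add_distrib]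
      congr 1
      simp [Finset.sum_ite_eq']
    rw [humin', ← hlhs]
    exact hsumkey
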